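/- Let S and S' be closed polygonal curves in the plane such that S' is a translate of the reversal of S. If the winding number is defined for points off the curves, then wind(P, S) + wind(P', S') = 0 whenever P' is the corresponding translate of P; in particular, for a polyline chain A₊ B₊ A₋ B₋ realizing the template A B A⁻¹ B⁻¹ with u = span(A), v = span(B), the enclosed oriented area equals u × v (the cross product x₁y₂ − y₁x₂). -/

import Mathlib

open Complex

/-- Contribution of the segment from `a` to `b` to the winding integral about `p`. -/
noncomputable def segWind (p a b : ℂ) : ℂ :=
  ∫ t in (0:ℝ)..1, (b - a) / (a + (t : ℂ) * (b - a) - p)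

/-- Winding number of the closed polyline with vertex list `L` about the point `p`,
defined by the Cauchy integral `(2πi)⁻¹ ∮ dz/(z - p)`. -/
noncomputable def wind (p : ℂ) (L : List ℂ) : ℂ :=
  (2 * (Real.pi : ℂ) * Complex.I)⁻¹ *
    ((L.zip L.tail).map (fun q => segWind p q.1 q.2)).sum

/-- `p` lies on the polyline with vertex list `L`. -/
def OnPolyline (p : ℂ) (L : List ℂ) : Prop :=
  ∃ q ∈ L.zip L.tail, p ∈ segment ℝ q.1 q.2

/-- Cross product of plane vectors (viewed as complex numbers). -/
def cross (u v : ℂ) : ℝ := u.re * v.im - u.im * v.re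

/-- Oriented enclosed area of a closed polyline (shoelace formula). -/
noncomputable def polyArea (L : List ℂ) : ℝ :=
  (1 / 2) * ((L.zip L.tail).map (fun q => cross q.1 q.2)).sum

namespace Stmt8Aux

variable {α : Type*} {β : Type*}

lemma getLast!_eq_iget [Inhabited α] {l : List α} (h : l ≠ []) :
    l.getLast! = l.getLast?.iget := by
  rw [List.getLast!_of_getLast? (List.getLast?_eq_getLast h),
    List.getLast?_eq_getLast h, Option.iget_some]

lemma head!_map [Inhabited α] [Inhabited β] (f : α → β) {l : List α} (h : l ≠ []) :
    (l.map f).head! = f l.head! := by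
  cases l with
  | nil => exact absurd rfl h
  | cons a t => rfl

lemma getLast!_map [Inhabited α] [Inhabited β] (f : α → β) {l : List α} (h : l ≠ []) :
    (l.map f).getLast! = f l.getLast! := by
  have h2 : l.map f ≠ [] := by simpa using h
  rw [getLast!_eq_iget h2, List.getLast?_map, getLast!_eq_iget h]
  rw [List.getLast?_eq_getLast h, Option.map_some, Option.iget_some, Option.iget_some]

lemma head!_reverse [Inhabited α] {l : List α} (h : l ≠ []) : l.reverse.head! = l.getLast! := by
  rw [List.head!_eq_head?, List.head?_reverse, getLast!_eq_iget h, Option.getD_default_eq_iget]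

lemma getLast!_reverse [Inhabited α] {l : List α} (h : l ≠ []) : l.reverse.getLast! = l.head! := by
  have h2 : l.reverse ≠ [] := by simpa using h
  rw [getLast!_eq_iget h2, List.getLast?_reverse, List.head!_eq_head?, Option.getD_default_eq_iget]

lemma getLast!_append [Inhabited α] {l m : List α} (hm : m ≠ []) :
    (l ++ m).getLast! = m.getLast! := by
  have h2 : l ++ m ≠ [] := by simp [hm]
  rw [getLast!_eq_iget h2, List.getLast?_append, getLast!_eq_iget hm,
    List.getLast?_eq_getLast hm, Option.some_or]

def edges : List α → List (α × α)
  | [] => []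
  | [_] => []
  | a :: b :: l => (a, b) :: edges (b :: l)

lemma zip_tail_eq_edges : ∀ L : List α, L.zip L.tail = edges L
  | [] => rfl
  | [_] => rfl
  | a :: b :: l => by simpa [edges] using zip_tail_eq_edges (b :: l)

lemma edges_append [Inhabited α] : ∀ (L M : List α), L ≠ [] → M ≠ [] →
    edges (L ++ M) = edges L ++ (L.getLast!, M.head!) :: edges M
  | [], _, h, _ => absurd rfl h
  | [a], M, _, hM => by
      cases M with
      | nil => exact absurd rfl hM
      | cons m M' => simp [edges, List.getLast!_cons_eq_getLastD]
  | a :: b :: l, M, _, hM => by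
      have ih := edges_append (b :: l) M (by simp) hM
      show edges (a :: ((b :: l) ++ M)) = _
      rw [show a :: ((b :: l) ++ M) = a :: b :: (l ++ M) from rfl]
      rw [show edges (a :: b :: (l ++ M)) = (a, b) :: edges (b :: (l ++ M)) from rfl]
      rw [show (b : α) :: (l ++ M) = (b :: l) ++ M from rfl, ih]
      simp [edges, List.getLast!_cons_eq_getLastD, List.getLastD_cons, List.getLast?_cons,
        List.getLastD_eq_getLast?]

lemma edges_map (f : α → α) : ∀ L : List α,
    edges (L.map f) = (edges L).map (fun q => (f q.1, f q.2))
  | [] => rfl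
  | [_] => rfl
  | a :: b :: l => by simpa [edges] using edges_map f (b :: l)

lemma edges_reverse [Inhabited α] : ∀ L : List α,
    edges L.reverse = ((edges L).map Prod.swap).reverse
  | [] => rfl
  | [_] => rfl
  | a :: b :: l => by
      have ih := edges_reverse (b :: l)
      have hne : (b :: l).reverse ≠ [] := by simp
      rw [show (a :: b :: l).reverse = (b :: l).reverse ++ [a] from by simp,
          edges_append _ _ hne (by simp), ih, getLast!_reverse (by simp : (b:α) :: l ≠ [])]
      simp [edges]

lemma sum_map_neg {M : Type*} [AddCommGroup M] (l : List α) (f : α → M) :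
    (l.map (fun x => -f x)).sum = -(l.map f).sum := by
  induction l with
  | nil => simp
  | cons a t ih => simp [ih]; abel

lemma sum_map_add {M : Type*} [AddCommMonoid M] (l : List α) (f g : α → M) :
    (l.map (fun x => f x + g x)).sum = (l.map f).sum + (l.map g).sum := by
  induction l with
  | nil => simp
  | cons a t ih => simp [ih]; abel

lemma segWind_translate (p u a b : ℂ) : segWind (p + u) (a + u) (b + u) = segWind p a b := by
  unfold segWind
  congr 1
  funext t
  have h1 : b + u - (a + u) = b - a := by ring
  rw [h1]
  congr 1
  ring

lemma segWind_rev (p a b : ℂ) : segWind p b a = - segWind p a b := by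
  unfold segWind
  have h := intervalIntegral.integral_comp_sub_left (a := (0:ℝ)) (b := 1)
      (fun t : ℝ => (b - a) / (a + (t:ℂ) * (b - a) - p)) 1
  norm_num at h
  rw [← h, ← intervalIntegral.integral_neg]
  congr 1
  funext t
  rw [← neg_div]
  congr 1 <;> ring

/-- The shoelace sum over the edge list. -/
noncomputable def crossSum (L : List ℂ) : ℝ :=
  ((edges L).map (fun q => cross q.1 q.2)).sum

lemma crossSum_reverse (L : List ℂ) : crossSum L.reverse = - crossSum L := by
  unfold crossSum
  rw [edges_reverse, List.map_reverse, List.sum_reverse, List.map_map]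
  rw [show ((fun q : ℂ × ℂ => cross q.1 q.2) ∘ Prod.swap)
      = fun q : ℂ × ℂ => -(cross q.1 q.2) from by funext q; simp [cross, Function.comp]; ring]
  exact sum_map_neg _ _

lemma telescope (wv : ℂ) : ∀ L : List ℂ, L ≠ [] →
    ((edges L).map (fun q => cross wv (q.2 - q.1))).sum = cross wv (L.getLast! - L.head!)
  | [], h => absurd rfl h
  | [a], _ => by simp [edges, cross, List.getLast!_cons_eq_getLastD]
  | a :: b :: l, _ => by
      have ih := telescope wv (b :: l) (by simp)
      rw [show edges (a :: b :: l) = (a, b) :: edges (b :: l) from rfl,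
        List.map_cons, List.sum_cons, ih]
      rw [show (a :: b :: l).getLast! = (b :: l).getLast! from by
        simp [List.getLast!_cons_eq_getLastD, List.getLastD_cons, List.getLast?_cons,
          List.getLastD_eq_getLast?]]
      simp only [cross, sub_re, sub_im, List.head!_cons]
      ring

lemma crossSum_translate (wv : ℂ) (L : List ℂ) (h : L ≠ []) :
    crossSum (L.map (· + wv)) = crossSum L + cross wv (L.getLast! - L.head!) := by
  unfold crossSum
  rw [edges_map, List.map_map, ← telescope wv L h,
    show ((fun q : ℂ × ℂ => cross q.1 q.2) ∘ (fun q : ℂ × ℂ => (q.1 + wv, q.2 + wv)))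
      = fun q : ℂ × ℂ => cross q.1 q.2 + cross wv (q.2 - q.1) from by
        funext q; simp [cross, Function.comp, add_re, add_im, sub_re, sub_im]; ring]
  exact sum_map_add _ _ _

end Stmt8Aux

open Stmt8Aux in
/-- (1) If the closed polyline `S'` is a translate (by `u`) of the reversal of the
closed polyline `S`, then for points off the curve the winding numbers of
corresponding points sum to zero.  (2) In particular, a closed chain
`A₊ B₊ A₋ B₋` realizing the template `A B A⁻¹ B⁻¹` encloses oriented area
`σ(A) × σ(B)`. -/
theorem stmt8 :
    (∀ (S : List ℂ) (u p : ℂ), S ≠ [] → S.getLast! = S.head! →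
      ¬ OnPolyline p S →
      wind p S + wind (p + u) ((S.reverse).map (· + u)) = 0) ∧
    (∀ (Ap Bp Am Bm : List ℂ) (w w' : ℂ),
      Ap ≠ [] → Bp ≠ [] →
      Am = (Ap.reverse).map (· + w) → Bm = (Bp.reverse).map (· + w') →
      Ap.getLast! = Bp.head! → Bp.getLast! = Am.head! →
      Am.getLast! = Bm.head! → Bm.getLast! = Ap.head! →
      polyArea (Ap ++ Bp ++ Am ++ Bm) =
        cross (Ap.getLast! - Ap.head!) (Bp.getLast! - Bp.head!)) := by
  constructor
  · -- Part 1
    intro S u p _ _ _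
    unfold wind
    have key : (((S.reverse.map (· + u)).zip (S.reverse.map (· + u)).tail).map
        (fun q => segWind (p + u) q.1 q.2)).sum
        = -(((S.zip S.tail).map (fun q => segWind p q.1 q.2)).sum) := by
      rw [zip_tail_eq_edges, zip_tail_eq_edges, edges_map, edges_reverse,
        List.map_reverse, List.map_reverse, List.sum_reverse, List.map_map, List.map_map]
      rw [show (((fun q : ℂ × ℂ => segWind (p + u) q.1 q.2)
            ∘ (fun q : ℂ × ℂ => (q.1 + u, q.2 + u))) ∘ Prod.swap)
          = fun q : ℂ × ℂ => -(segWind p q.1 q.2) from by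
            funext q
            show segWind (p + u) (q.2 + u) (q.1 + u) = -(segWind p q.1 q.2)
            rw [segWind_translate p u q.2 q.1, segWind_rev]]
      exact sum_map_neg _ _
    rw [key]
    ring
  · -- Part 2
    intro Ap Bp Am Bm w w' hA hB hAmdef hBmdef h1 h2 h3 h4
    have hAr : Ap.reverse ≠ [] := by simpa using hA
    have hBr : Bp.reverse ≠ [] := by simpa using hB
    have hAm : Am ≠ [] := by rw [hAmdef]; simpa using hA
    have hBm : Bm ≠ [] := by rw [hBmdef]; simpa using hB
    -- heads and lasts of the reversed translated pieces
    have hAmh : Am.head! = Ap.getLast! + w := by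
      rw [hAmdef, head!_map _ hAr, head!_reverse hA]
    have hAml : Am.getLast! = Ap.head! + w := by
      rw [hAmdef, getLast!_map _ hAr, getLast!_reverse hA]
    have hBmh : Bm.head! = Bp.getLast! + w' := by
      rw [hBmdef, head!_map _ hBr, head!_reverse hB]
    -- the edge decomposition
    have hAB : Ap ++ Bp ≠ [] := by simp [hA]
    have hABAm : Ap ++ Bp ++ Am ≠ [] := by simp [hAm]
    have e1 : edges (Ap ++ Bp ++ Am ++ Bm)
        = edges (Ap ++ Bp ++ Am) ++ ((Ap ++ Bp ++ Am).getLast!, Bm.head!) :: edges Bm :=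
      edges_append _ _ hABAm hBm
    have e2 : edges (Ap ++ Bp ++ Am)
        = edges (Ap ++ Bp) ++ ((Ap ++ Bp).getLast!, Am.head!) :: edges Am :=
      edges_append _ _ hAB hAm
    have e3 : edges (Ap ++ Bp) = edges Ap ++ (Ap.getLast!, Bp.head!) :: edges Bp :=
      edges_append _ _ hA hB
    have hlast1 : (Ap ++ Bp).getLast! = Bp.getLast! := getLast!_append hB
    have hlast2 : (Ap ++ Bp ++ Am).getLast! = Am.getLast! := getLast!_append hAm
    -- compute the shoelace sum
    have hsum : ((edges (Ap ++ Bp ++ Am ++ Bm)).map (fun q => cross q.1 q.2)).sum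
        = crossSum Ap + crossSum Bp + crossSum Am + crossSum Bm
          + cross Ap.getLast! Bp.head! + cross Bp.getLast! Am.head!
          + cross Am.getLast! Bm.head! := by
      rw [e1, e2, e3, hlast1, hlast2]
      simp only [List.map_append, List.map_cons, List.sum_append, List.sum_cons, crossSum]
      ring
    have hcross0 : ∀ x : ℂ, cross x x = 0 := by intro x; simp [cross]; ring
    -- the reversed translated pieces
    have hAmsum : crossSum Am = -crossSum Ap + cross w (Ap.head! - Ap.getLast!) := by
      rw [hAmdef, crossSum_translate w _ hAr, crossSum_reverse,
        getLast!_reverse hA, head!_reverse hA]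
    have hBmsum : crossSum Bm = -crossSum Bp + cross w' (Bp.head! - Bp.getLast!) := by
      rw [hBmdef, crossSum_translate w' _ hBr, crossSum_reverse,
        getLast!_reverse hB, head!_reverse hB]
    have c1 : cross Ap.getLast! Bp.head! = 0 := by rw [h1]; exact hcross0 _
    have c2 : cross Bp.getLast! Am.head! = 0 := by rw [h2]; exact hcross0 _
    have c3 : cross Am.getLast! Bm.head! = 0 := by rw [h3]; exact hcross0 _
    have hw : w = Bp.getLast! - Ap.getLast! := by rw [h2.trans hAmh]; ring
    have hw' : w' = Ap.head! - Ap.getLast! := by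
      linear_combination hAml - (h3.trans hBmh) + hw
    unfold polyArea
    rw [zip_tail_eq_edges, hsum, c1, c2, c3, hAmsum, hBmsum, hw, hw', h1]
    simp only [cross, sub_re, sub_im, add_re, add_im]
    ring
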